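/- Let f : [0,∞) → ℝ be continuous, nonnegative, strictly increasing with f(0) = 0. For each R > 0 and η ∈ [0,1), suppose u_R is a C² solution on [η,1] of u'' + (2/s)u' = R² f(u), u'(η) = 0, u'(1) + βR(u(1) − σ̄) = 0, with 0 ≤ u_R ≤ σ̄, and suppose u_R(s) is nondecreasing in s and nonincreasing in R for each fixed s. Then lim_{R→+∞} u_R(s) = 0 for every s ∈ [η,1), uniformly on compact subsets of [η,1). -/

import Mathlib

open Set Filter Topology MeasureTheory

set_option maxHeartbeats 2000000 in
/-- u_R → 0 as R → ∞, pointwise on [η,1) and uniformly on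
compact subsets of [η,1). -/
theorem stmt7
    (f : ℝ → ℝ) (hfc : ContinuousOn f (Set.Ici 0)) (hf0 : f 0 = 0)
    (hfnonneg : ∀ x ∈ Set.Ici (0:ℝ), 0 ≤ f x)
    (hfmono : StrictMonoOn f (Set.Ici 0))
    (β σb η : ℝ) (hβ : 0 < β) (hσb : 0 < σb) (hη0 : 0 ≤ η) (hη1 : η < 1)
    (u u' u'' : ℝ → ℝ → ℝ)
    (hu : ∀ R > (0:ℝ), ∀ s ∈ Set.Icc η 1, HasDerivAt (u R) (u' R s) s)
    (hu' : ∀ R > (0:ℝ), ∀ s ∈ Set.Icc η 1, HasDerivAt (u' R) (u'' R s) s)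
    (hode : ∀ R > (0:ℝ), ∀ s ∈ Set.Ioo η 1,
      u'' R s + (2 / s) * u' R s = R ^ 2 * f (u R s))
    (hbcη : ∀ R > (0:ℝ), u' R η = 0)
    (hbc1 : ∀ R > (0:ℝ), u' R 1 + β * R * (u R 1 - σb) = 0)
    (hbd : ∀ R > (0:ℝ), ∀ s ∈ Set.Icc η 1, 0 ≤ u R s ∧ u R s ≤ σb)
    (hmono_s : ∀ R > (0:ℝ), MonotoneOn (u R) (Set.Icc η 1))
    (hanti_R : ∀ s ∈ Set.Icc η 1, AntitoneOn (fun R => u R s) (Set.Ioi 0)) :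
    (∀ s ∈ Set.Ico η 1, Filter.Tendsto (fun R => u R s) Filter.atTop (nhds 0)) ∧
    (∀ b, η ≤ b → b < 1 →
      TendstoUniformlyOn (fun R s => u R s) (fun _ => 0) Filter.atTop
        (Set.Icc η b)) := by
  -- Key estimate: if u R s₀ ≥ ε then R² f(ε) c(s₀) ≤ σb
  have key : ∀ s₀ ∈ Set.Ico η 1, ∀ ε > (0:ℝ), ∀ R > (0:ℝ),
      ε ≤ u R s₀ →
      R ^ 2 * (f ε * ((((1+s₀)/2) ^ 3 - s₀ ^ 3) * (1 - (1+s₀)/2) / 3)) ≤ σb := by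
    rintro s₀ ⟨hs₀η, hs₀1⟩ ε hε R hR hus
    set t : ℝ := (1 + s₀) / 2 with ht
    have hs₀0 : (0:ℝ) ≤ s₀ := le_trans hη0 hs₀η
    have hst : s₀ < t := by rw [ht]; linarith
    have ht1 : t < 1 := by rw [ht]; linarith
    have ht0 : 0 < t := by rw [ht]; linarith
    have hmemt : Set.Icc t 1 ⊆ Set.Icc η 1 := Set.Icc_subset_Icc (by linarith) le_rfl
    have hmems : Set.Icc s₀ 1 ⊆ Set.Icc η 1 := Set.Icc_subset_Icc hs₀η le_rfl
    have hfε : 0 < f ε := by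
      have := hfmono (Set.self_mem_Ici) (Set.mem_Ici.2 hε.le) hε
      rwa [hf0] at this
    -- g τ = τ² u'(τ)
    set g : ℝ → ℝ := fun τ => τ ^ 2 * u' R τ with hg
    have hgderiv : ∀ τ ∈ Set.Icc η 1,
        HasDerivAt g (2 * τ * u' R τ + τ ^ 2 * u'' R τ) τ := by
      intro τ hτ
      have h := (hasDerivAt_pow 2 τ).mul (hu' R hR τ hτ)
      refine h.congr_deriv ?_
      ring
    have hgcont : ContinuousOn g (Set.Icc η 1) :=
      fun τ hτ => ((hgderiv τ hτ).continuousAt).continuousWithinAt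
    have hgd' : ∀ τ ∈ Set.Ioo η 1,
        2 * τ * u' R τ + τ ^ 2 * u'' R τ = τ ^ 2 * (R ^ 2 * f (u R τ)) := by
      intro τ hτ
      have hτ0 : 0 < τ := lt_of_le_of_lt hη0 hτ.1
      have h2 := hode R hR τ hτ
      have h3 : u'' R τ = R ^ 2 * f (u R τ) - (2 / τ) * u' R τ := by linarith
      rw [h3]
      field_simp
      ring
    -- g is monotone on [η,1]
    have hgmono : MonotoneOn g (Set.Icc η 1) := by
      apply monotoneOn_of_hasDerivWithinAt_nonneg (convex_Icc η 1) hgcont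
        (f' := fun τ => 2 * τ * u' R τ + τ ^ 2 * u'' R τ)
      · intro τ hτ
        rw [interior_Icc] at hτ
        exact ((hgderiv τ (Set.Ioo_subset_Icc_self hτ)).hasDerivWithinAt)
      · intro τ hτ
        rw [interior_Icc] at hτ
        rw [hgd' τ hτ]
        have h0 : 0 ≤ f (u R τ) :=
          hfnonneg _ (hbd R hR τ (Set.Ioo_subset_Icc_self hτ)).1
        positivity
    have hgη : g η = 0 := by simp [hg, hbcη R hR]
    have hg0 : ∀ τ ∈ Set.Icc η 1, 0 ≤ g τ := by
      intro τ hτ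
      have := hgmono (Set.left_mem_Icc.2 (by linarith)) hτ hτ.1
      linarith [hgη ▸ this]
    -- comparison: F = g - R² f(ε) τ³/3 monotone on [s₀,1]
    have hfle : ∀ τ ∈ Set.Icc s₀ 1, f ε ≤ f (u R τ) := by
      intro τ hτ
      have h1 : u R s₀ ≤ u R τ :=
        hmono_s R hR (hmems ⟨le_rfl, hs₀1.le⟩) (hmems hτ) hτ.1
      have h2 : ε ≤ u R τ := le_trans hus h1
      exact hfmono.monotoneOn (Set.mem_Ici.2 hε.le)
        (Set.mem_Ici.2 (hbd R hR τ (hmems hτ)).1) h2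
    set F : ℝ → ℝ := fun τ => g τ - R ^ 2 * f ε * (τ ^ 3 / 3) with hF
    have hFderiv : ∀ τ ∈ Set.Icc s₀ 1,
        HasDerivAt F (2 * τ * u' R τ + τ ^ 2 * u'' R τ - R ^ 2 * f ε * τ ^ 2) τ := by
      intro τ hτ
      have h1 := hgderiv τ (hmems hτ)
      have h2 : HasDerivAt (fun τ : ℝ => R ^ 2 * f ε * (τ ^ 3 / 3))
          (R ^ 2 * f ε * τ ^ 2) τ := by
        have := ((hasDerivAt_pow 3 τ).div_const 3).const_mul (R ^ 2 * f ε)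
        refine this.congr_deriv ?_
        ring
      exact h1.sub h2
    have hFmono : MonotoneOn F (Set.Icc s₀ 1) := by
      apply monotoneOn_of_hasDerivWithinAt_nonneg (convex_Icc s₀ 1)
        (fun τ hτ => ((hFderiv τ hτ).continuousAt).continuousWithinAt)
        (f' := fun τ => 2 * τ * u' R τ + τ ^ 2 * u'' R τ - R ^ 2 * f ε * τ ^ 2)
      · intro τ hτ
        rw [interior_Icc] at hτ
        exact ((hFderiv τ (Set.Ioo_subset_Icc_self hτ)).hasDerivWithinAt)
      · intro τ hτ
        rw [interior_Icc] at hτ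
        have hτ' : τ ∈ Set.Ioo η 1 := ⟨lt_of_le_of_lt hs₀η hτ.1, hτ.2⟩
        rw [hgd' τ hτ']
        have h1 : f ε ≤ f (u R τ) := hfle τ (Set.Ioo_subset_Icc_self hτ)
        have h2 : (0:ℝ) ≤ τ ^ 2 * R ^ 2 * (f (u R τ) - f ε) :=
          mul_nonneg (by positivity) (by linarith)
        nlinarith [h2]
    -- lower bound for g on [t,1]
    set m : ℝ := R ^ 2 * f ε * ((t ^ 3 - s₀ ^ 3) / 3) with hm
    have hm0 : 0 < m := by
      have h1 : s₀ ^ 3 < t ^ 3 := pow_lt_pow_left₀ hst hs₀0 (by norm_num)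
      have h2 : 0 < R ^ 2 * f ε := by positivity
      rw [hm]
      exact mul_pos h2 (by linarith)
    have hglb : ∀ τ ∈ Set.Icc t 1, m ≤ g τ := by
      intro τ hτ
      have hτs : τ ∈ Set.Icc s₀ 1 := ⟨le_trans hst.le hτ.1, hτ.2⟩
      have h1 : F s₀ ≤ F τ := hFmono (Set.left_mem_Icc.2 (by linarith)) hτs hτs.1
      have h2 : 0 ≤ g s₀ := hg0 s₀ ⟨hs₀η, hs₀1.le⟩
      have h3 : t ^ 3 ≤ τ ^ 3 := pow_le_pow_left₀ ht0.le hτ.1 3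
      have h4 : 0 < R ^ 2 * f ε := by positivity
      simp only [hF] at h1
      rw [hm]
      nlinarith
    -- u' ≥ m on (t,1)
    have hu'lb : ∀ τ ∈ Set.Ioo t 1, m ≤ u' R τ := by
      intro τ hτ
      have hτ0 : 0 < τ := lt_trans ht0 hτ.1
      have h1 : m ≤ τ ^ 2 * u' R τ := hglb τ ⟨hτ.1.le, hτ.2.le⟩
      have h2 : τ ^ 2 ≤ 1 := by nlinarith [hτ.2]
      have hup : 0 ≤ u' R τ := by nlinarith [pow_pos hτ0 2]
      nlinarith [mul_nonneg (sub_nonneg.2 h2) hup]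
    -- G = u - m τ monotone on [t,1]
    have hGmono : MonotoneOn (fun τ => u R τ - m * τ) (Set.Icc t 1) := by
      apply monotoneOn_of_hasDerivWithinAt_nonneg (convex_Icc t 1)
        (f' := fun τ => u' R τ - m)
      · intro τ hτ
        exact (((hu R hR τ (hmemt hτ)).sub
          ((hasDerivAt_id τ).const_mul m)).continuousAt).continuousWithinAt
      · intro τ hτ
        rw [interior_Icc] at hτ
        have := (hu R hR τ (hmemt (Set.Ioo_subset_Icc_self hτ))).sub
          ((hasDerivAt_id τ).const_mul m)
        exact (this.congr_deriv (by ring)).hasDerivWithinAt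
      · intro τ hτ
        rw [interior_Icc] at hτ
        have := hu'lb τ hτ
        simp only [sub_nonneg]
        linarith
    have hG : u R t - m * t ≤ u R 1 - m * 1 :=
      hGmono (Set.left_mem_Icc.2 ht1.le) (Set.right_mem_Icc.2 ht1.le) ht1.le
    have hub : u R 1 ≤ σb := (hbd R hR 1 (Set.right_mem_Icc.2 hη1.le)).2
    have hlb : 0 ≤ u R t := (hbd R hR t (hmemt (Set.left_mem_Icc.2 ht1.le))).1
    have hfinal : m * (1 - t) ≤ σb := by nlinarith
    rw [hm] at hfinal
    have heq : R ^ 2 * (f ε * ((t ^ 3 - s₀ ^ 3) * (1 - t) / 3))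
        = R ^ 2 * f ε * ((t ^ 3 - s₀ ^ 3) / 3) * (1 - t) := by ring
    rw [heq]
    exact hfinal
  -- Pointwise convergence
  have hpt : ∀ s ∈ Set.Ico η 1, Filter.Tendsto (fun R => u R s) Filter.atTop (nhds 0) := by
    intro s hs
    rw [Metric.tendsto_atTop]
    intro ε hε
    set c : ℝ := (((1+s)/2) ^ 3 - s ^ 3) * (1 - (1+s)/2) / 3 with hc
    have hs0 : (0:ℝ) ≤ s := le_trans hη0 hs.1
    have hc0 : 0 < c := by
      have h1 : s ^ 3 < ((1+s)/2) ^ 3 :=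
        pow_lt_pow_left₀ (by linarith [hs.2]) hs0 (by norm_num)
      have h2 : (0:ℝ) < 1 - (1+s)/2 := by linarith [hs.2]
      rw [hc]
      exact div_pos (mul_pos (by linarith) h2) (by norm_num)
    have hfε : 0 < f ε := by
      have := hfmono (Set.self_mem_Ici) (Set.mem_Ici.2 hε.le) hε
      rwa [hf0] at this
    refine ⟨max 1 (Real.sqrt (σb / (f ε * c)) + 1), fun R hR => ?_⟩
    have hR1 : (1:ℝ) ≤ R := le_trans (le_max_left _ _) hR
    have hR0 : (0:ℝ) < R := lt_of_lt_of_le one_pos hR1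
    have hRs : Real.sqrt (σb / (f ε * c)) + 1 ≤ R := le_trans (le_max_right _ _) hR
    have hdiv : (0:ℝ) ≤ σb / (f ε * c) := le_of_lt (div_pos hσb (mul_pos hfε hc0))
    have hR2 : σb / (f ε * c) < R ^ 2 := by
      have h1 : Real.sqrt (σb / (f ε * c)) < R := by linarith
      have h2 := pow_lt_pow_left₀ h1 (Real.sqrt_nonneg _) (n := 2) (by norm_num)
      rwa [Real.sq_sqrt hdiv] at h2
    have hσR : σb < R ^ 2 * (f ε * c) := by
      rw [div_lt_iff₀ (mul_pos hfε hc0)] at hR2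
      linarith
    have hucε : u R s < ε := by
      by_contra h
      push_neg at h
      have := key s hs ε hε R hR0 h
      rw [← hc] at this
      linarith
    have h0 : 0 ≤ u R s := (hbd R hR0 s (Set.Ico_subset_Icc_self hs)).1
    rw [Real.dist_eq, sub_zero, abs_of_nonneg h0]
    exact hucε
  refine ⟨hpt, fun b hb hb1 => ?_⟩
  rw [Metric.tendstoUniformlyOn_iff]
  intro ε hε
  have hb' := hpt b ⟨hb, hb1⟩
  rw [Metric.tendsto_atTop] at hb'
  obtain ⟨R₀, hR₀⟩ := hb' ε hε
  filter_upwards [eventually_ge_atTop (max R₀ 1)] with R hR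
  intro s hs
  have hR1 : (1:ℝ) ≤ R := le_trans (le_max_right _ _) hR
  have hR0 : (0:ℝ) < R := lt_of_lt_of_le one_pos hR1
  have hbmem : b ∈ Set.Icc η 1 := ⟨hb, hb1.le⟩
  have hsmem : s ∈ Set.Icc η 1 := ⟨hs.1, le_trans hs.2 hb1.le⟩
  have h1 := hR₀ R (le_trans (le_max_left _ _) hR)
  rw [Real.dist_eq, sub_zero, abs_of_nonneg (hbd R hR0 b hbmem).1] at h1
  have hms : u R s ≤ u R b := hmono_s R hR0 hsmem hbmem hs.2
  have h0 : 0 ≤ u R s := (hbd R hR0 s hsmem).1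
  rw [Real.dist_eq]
  rw [abs_of_nonpos (by linarith)]
  linarith
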